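/- Let δ ∈ (0, 1/2) satisfy H(δ) < 1/3, where H is the binary entropy function. Then there exists K such that for every k ≥ K there exist invertible k × k matrices A₁, A₂ over 𝔽₂ such that the binary [3k, k] linear code with generator matrix (I_k | A₁ | A₂), namely {(u, u A₁, u A₂) : u ∈ 𝔽₂^k}, has minimum Hamming distance greater than 3δk. In particular, there exist arbitrarily long 3-CIS codes of relative distance at least δ for every δ with H(δ) < 1/3. -/

import Mathlib

open Finset

/-- The binary entropy function `H(x) = −x log₂ x − (1−x) log₂ (1−x)`. -/
noncomputable def binH (x : ℝ) : ℝ := -x * Real.logb 2 x - (1 - x) * Real.logb 2 (1 - x)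

section Aux

variable {k : ℕ}

lemma zmod2_eq_one {x : ZMod 2} (h : x ≠ 0) : x = 1 := by revert h; revert x; decide

lemma rowop (j : Fin k) (z : Fin k → ZMod 2) (hz : z j = 0) :
    ∃ C : Matrix (Fin k) (Fin k) (ZMod 2), IsUnit C ∧
      ∀ x, Matrix.vecMul x C = x + (x j) • z := by
  set E : Matrix (Fin k) (Fin k) (ZMod 2) := Matrix.of (fun a b => if a = j then z b else 0) with hE
  have hEE : E * E = 0 := by
    ext a b
    simp only [Matrix.mul_apply, Matrix.zero_apply, hE, Matrix.of_apply]
    rcases eq_or_ne a j with ha | ha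
    · subst ha
      simp only [eq_self_iff_true, if_true, mul_ite, mul_zero]
      rw [Finset.sum_ite_eq' univ a (fun c => z c * z b)]
      simp [hz]
    · simp [ha]
  have hvm : ∀ x : Fin k → ZMod 2, Matrix.vecMul x E = (x j) • z := by
    intro x
    funext b
    simp only [Matrix.vecMul, dotProduct, hE, Matrix.of_apply, Pi.smul_apply, smul_eq_mul]
    simp only [mul_ite, mul_zero]
    rw [Finset.sum_ite_eq' univ j (fun a => x a * z b)]
    simp
  refine ⟨1 + E, ?_, ?_⟩
  · have h2 : E + E = 0 := by
      ext a b; exact CharTwo.add_self_eq_zero _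
    have hmul : (1 + E) * (1 + E) = 1 := by
      calc (1 + E) * (1 + E) = 1 + (E + E) + E * E := by noncomm_ring
      _ = 1 := by rw [h2, hEE]; abel
    exact ⟨⟨1 + E, 1 + E, hmul, hmul⟩, rfl⟩
  · intro x
    rw [Matrix.vecMul_add, Matrix.vecMul_one, hvm]

lemma swapop (j l : Fin k) :
    ∃ P : Matrix (Fin k) (Fin k) (ZMod 2), IsUnit P ∧
      ∀ x : Fin k → ZMod 2, Matrix.vecMul x P = x ∘ (Equiv.swap j l) := by
  set σ := Equiv.swap j l with hσ
  set P : Matrix (Fin k) (Fin k) (ZMod 2) := Matrix.of (fun a b => if σ a = b then 1 else 0) with hP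
  have hPP : P * P = 1 := by
    ext a b
    simp only [Matrix.mul_apply, hP, Matrix.of_apply, Matrix.one_apply, ite_mul, zero_mul, one_mul]
    have : ∀ c : Fin k, (if σ a = c then (if σ c = b then (1:ZMod 2) else 0) else 0)
        = (if c = σ a then (if σ c = b then (1:ZMod 2) else 0) else 0) := by
      intro c; exact if_congr eq_comm rfl rfl
    rw [Finset.sum_congr rfl (fun c _ => this c),
      Finset.sum_ite_eq' univ (σ a) (fun c => if σ c = b then (1:ZMod 2) else 0)]
    simp [hσ, Equiv.swap_apply_self, eq_comm]
  refine ⟨P, ⟨⟨P, P, hPP, hPP⟩, rfl⟩, ?_⟩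
  intro x
  funext b
  simp only [Matrix.vecMul, dotProduct, hP, Matrix.of_apply, Function.comp_apply,
    mul_ite, mul_one, mul_zero]
  have : ∀ a : Fin k, (if σ a = b then x a else 0) = (if a = σ b then x a else 0) := by
    intro a
    congr 1
    simp only [eq_iff_iff]
    constructor
    · rintro rfl; rw [hσ, Equiv.swap_apply_self]
    · rintro rfl; rw [hσ, Equiv.swap_apply_self]
  rw [Finset.sum_congr rfl (fun a _ => this a), Finset.sum_ite_eq' univ (σ b) x]
  simp

lemma exists_unit_vecMul_eq (v w : Fin k → ZMod 2) (hv : v ≠ 0) (hw : w ≠ 0) :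
    ∃ C : Matrix (Fin k) (Fin k) (ZMod 2), IsUnit C ∧ Matrix.vecMul v C = w := by
  obtain ⟨j, hj⟩ : ∃ j, v j ≠ 0 := Function.ne_iff.mp hv
  obtain ⟨l, hl⟩ : ∃ l, w l ≠ 0 := Function.ne_iff.mp hw
  have hvj : v j = 1 := zmod2_eq_one hj
  have hwl : w l = 1 := zmod2_eq_one hl
  obtain ⟨C₁, hC₁u, hC₁⟩ := rowop j (v + Pi.single j 1)
    (by simp only [Pi.add_apply, Pi.single_eq_same, hvj]; decide)
  obtain ⟨P, hPu, hP⟩ := swapop j l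
  obtain ⟨C₂, hC₂u, hC₂⟩ := rowop l (w + Pi.single l 1)
    (by simp only [Pi.add_apply, Pi.single_eq_same, hwl]; decide)
  refine ⟨C₁ * P * C₂, (hC₁u.mul hPu).mul hC₂u, ?_⟩
  have h1 : Matrix.vecMul v C₁ = Pi.single j 1 := by
    rw [hC₁ v, hvj, one_smul]
    funext i
    simp only [Pi.add_apply]
    rw [← add_assoc, CharTwo.add_self_eq_zero, zero_add]
  have h2 : Matrix.vecMul (Pi.single j 1) P = Pi.single l 1 := by
    rw [hP]
    funext b
    simp only [Function.comp_apply, Pi.single_apply]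
    congr 1
    simp only [eq_iff_iff]
    constructor
    · intro h
      have := congrArg (Equiv.swap j l) h
      rwa [Equiv.swap_apply_self, Equiv.swap_apply_left] at this
    · intro h; rw [h]; exact Equiv.swap_apply_right j l
  have h3 : Matrix.vecMul (Pi.single l 1) C₂ = w := by
    rw [hC₂, Pi.single_eq_same, one_smul]
    funext i
    simp only [Pi.add_apply]
    rw [add_comm (w i), ← add_assoc, CharTwo.add_self_eq_zero, zero_add]
  rw [← Matrix.vecMul_vecMul, ← Matrix.vecMul_vecMul, h1, h2, h3]

lemma vecMul_ne_zero' {A : Matrix (Fin k) (Fin k) (ZMod 2)} (hA : IsUnit A)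
    {u : Fin k → ZMod 2} (hu : u ≠ 0) : Matrix.vecMul u A ≠ 0 := by
  obtain ⟨B, hB⟩ := hA.exists_right_inv
  intro h
  apply hu
  have h2 : Matrix.vecMul (Matrix.vecMul u A) B = Matrix.vecMul u (A * B) :=
    Matrix.vecMul_vecMul u A B
  rw [h, Matrix.zero_vecMul, hB, Matrix.vecMul_one] at h2
  exact h2.symm

lemma sum_f (a b : ℝ) (k : ℕ) :
    ∑ x : Fin k → ZMod 2, a ^ hammingNorm x * b ^ (k - hammingNorm x) = (b + a) ^ k := by
  have key : ∀ x : Fin k → ZMod 2,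
      a ^ hammingNorm x * b ^ (k - hammingNorm x) = ∏ i, (if x i = 0 then b else a) := by
    intro x
    rw [Finset.prod_ite, Finset.prod_const, Finset.prod_const]
    have h1 : (univ.filter fun i => ¬ x i = 0).card = hammingNorm x := rfl
    have h2 : (univ.filter fun i => x i = 0).card = k - hammingNorm x := by
      have := Finset.card_filter_add_card_filter_not (s := (univ : Finset (Fin k)))
        (p := fun i => x i = 0)
      simp only [Finset.card_univ, Fintype.card_fin] at this
      have h3 : hammingNorm x = (univ.filter fun i => ¬ x i = 0).card := rfl
      omega
    rw [h1, h2, mul_comm]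
  rw [Finset.sum_congr rfl (fun x _ => key x)]
  rw [← Fintype.piFinset_univ,
    ← Finset.prod_univ_sum (fun _ : Fin k => (univ : Finset (ZMod 2)))
      (fun _ c => if c = 0 then b else a)]
  have : ∑ c : ZMod 2, (if c = 0 then b else a) = b + a := by
    show ∑ c : Fin 2, (if c = (0 : Fin 2) then b else a) = b + a
    rw [Fin.sum_univ_two]
    norm_num
  rw [Finset.prod_congr rfl (fun i _ => this), Finset.prod_const, Finset.card_univ,
    Fintype.card_fin]

lemma pow_mu_le {a b : ℝ} (ha : 0 < a) (hab : a ≤ b) (hb : 0 < b) {n W : ℕ} {s : ℝ}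
    (hW : (W : ℝ) ≤ s) (hs : s ≤ n) :
    a ^ s * b ^ ((n : ℝ) - s) ≤ a ^ W * b ^ (n - W) := by
  have hWn : W ≤ n := by exact_mod_cast hW.trans hs
  have hrw : a ^ W * b ^ (n - W) = a ^ ((W:ℝ)) * b ^ ((n:ℝ) - (W:ℝ)) := by
    rw [← Nat.cast_sub hWn, Real.rpow_natCast, Real.rpow_natCast]
  rw [hrw]
  have key : ∀ t : ℝ, a ^ t * b ^ ((n:ℝ) - t) = b ^ (n:ℝ) * (a / b) ^ t := by
    intro t
    rw [Real.rpow_sub hb, Real.div_rpow ha.le hb.le]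
    field_simp
  rw [key, key]
  apply mul_le_mul_of_nonneg_left _ (Real.rpow_nonneg hb.le _)
  exact Real.rpow_le_rpow_of_exponent_ge (div_pos ha hb) (div_le_one_of_le₀ hab hb.le) hW

end Aux

lemma Tcard {δ : ℝ} (hδ0 : 0 < δ) (hδ2 : δ < 1/2) (hH : binH δ < 1/3) {k : ℕ} (hk : 2 ≤ k)
    (T' : Finset ((Fin k → ZMod 2) × ((Fin k → ZMod 2) × (Fin k → ZMod 2))))
    (hmem : ∀ t ∈ T', ((hammingNorm t.1 : ℝ) + hammingNorm t.2.1 + hammingNorm t.2.2) ≤ 3 * δ * k) :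
    T'.card < (2 ^ k - 1) ^ 2 := by
  have hk0 : 0 < k := by omega
  set b : ℝ := 1 - δ with hb
  have hbpos : 0 < b := by rw [hb]; linarith
  have hab : δ ≤ b := by rw [hb]; linarith
  set f : (Fin k → ZMod 2) → ℝ := fun x => δ ^ hammingNorm x * b ^ (k - hammingNorm x) with hf
  have hfnn : ∀ x, 0 ≤ f x := fun x =>
    mul_nonneg (pow_nonneg hδ0.le _) (pow_nonneg hbpos.le _)
  have sumf : ∑ x : Fin k → ZMod 2, f x = 1 := by
    rw [hf, sum_f δ b k]
    rw [hb]
    norm_num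
  have h2 : ∑ yz : (Fin k → ZMod 2) × (Fin k → ZMod 2), f yz.1 * f yz.2 = 1 := by
    rw [Fintype.sum_prod_type, ← Finset.sum_mul_sum, sumf, mul_one]
  have h3 : ∑ t : (Fin k → ZMod 2) × ((Fin k → ZMod 2) × (Fin k → ZMod 2)),
      f t.1 * f t.2.1 * f t.2.2 = 1 := by
    rw [Fintype.sum_prod_type]
    have : ∀ x, (∑ yz : (Fin k → ZMod 2) × (Fin k → ZMod 2), f x * f yz.1 * f yz.2) = f x := by
      intro x
      simp only [mul_assoc, ← Finset.mul_sum, h2, mul_one]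
    rw [Finset.sum_congr rfl (fun x _ => this x), sumf]
  -- lower bound on terms in T'
  set μ : ℝ := δ ^ (3 * δ * k) * b ^ ((3 * k : ℝ) - 3 * δ * k) with hμ
  have hμpos : 0 < μ :=
    mul_pos (Real.rpow_pos_of_pos hδ0 _) (Real.rpow_pos_of_pos hbpos _)
  have hwle : ∀ x : Fin k → ZMod 2, hammingNorm x ≤ k := by
    intro x
    calc hammingNorm x ≤ (univ : Finset (Fin k)).card := Finset.card_filter_le _ _
    _ = k := by simp
  have hlow : ∀ t ∈ T', μ ≤ f t.1 * f t.2.1 * f t.2.2 := by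
    intro t ht
    have hW := hmem t ht
    set w1 := hammingNorm t.1
    set w2 := hammingNorm t.2.1
    set w3 := hammingNorm t.2.2
    have hprod : f t.1 * f t.2.1 * f t.2.2
        = δ ^ (w1 + w2 + w3) * b ^ (3 * k - (w1 + w2 + w3)) := by
      have hsub : (k - w1) + (k - w2) + (k - w3) = 3 * k - (w1 + w2 + w3) := by
        have := hwle t.1; have := hwle t.2.1; have := hwle t.2.2
        omega
      rw [hf]
      simp only []
      rw [← hsub, pow_add, pow_add, pow_add, pow_add]
      ring
    rw [hprod]
    have hcast : ((w1 + w2 + w3 : ℕ) : ℝ) ≤ 3 * δ * k := by push_cast; linarith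
    have hs3k : 3 * δ * k ≤ ((3 * k : ℕ) : ℝ) := by
      push_cast
      nlinarith [Nat.cast_nonneg (α := ℝ) k]
    have := pow_mu_le hδ0 hab hbpos (n := 3 * k) (W := w1 + w2 + w3) hcast hs3k
    rw [hμ]
    convert this using 3
    push_cast
    ring
  -- card bound
  have hcard : (T'.card : ℝ) * μ ≤ 1 := by
    calc (T'.card : ℝ) * μ = ∑ _t ∈ T', μ := by rw [Finset.sum_const, nsmul_eq_mul]
    _ ≤ ∑ t ∈ T', f t.1 * f t.2.1 * f t.2.2 := Finset.sum_le_sum hlow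
    _ ≤ ∑ t : (Fin k → ZMod 2) × ((Fin k → ZMod 2) × (Fin k → ZMod 2)),
        f t.1 * f t.2.1 * f t.2.2 :=
      Finset.sum_le_sum_of_subset_of_nonneg (Finset.subset_univ _)
        (fun t _ _ => mul_nonneg (mul_nonneg (hfnn _) (hfnn _)) (hfnn _))
    _ = 1 := h3
  have hcard2 : (T'.card : ℝ) ≤ μ⁻¹ := by
    rw [← one_div, le_div_iff₀ hμpos]
    exact hcard
  -- identify μ⁻¹
  have hμeq : μ⁻¹ = (2 : ℝ) ^ (3 * (k : ℝ) * binH δ) := by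
    have hδeq : δ = (2 : ℝ) ^ (Real.logb 2 δ) :=
      (Real.rpow_logb (by norm_num) (by norm_num) hδ0).symm
    have hbeq : b = (2 : ℝ) ^ (Real.logb 2 b) :=
      (Real.rpow_logb (by norm_num) (by norm_num) hbpos).symm
    have : μ = (2 : ℝ) ^ (-(3 * (k : ℝ) * binH δ)) := by
      calc μ = ((2:ℝ) ^ (Real.logb 2 δ)) ^ (3 * δ * k)
          * ((2:ℝ) ^ (Real.logb 2 b)) ^ ((3 * k : ℝ) - 3 * δ * k) := by
            rw [hμ, ← hδeq, ← hbeq]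
      _ = (2:ℝ) ^ (Real.logb 2 δ * (3 * δ * k) + Real.logb 2 b * ((3 * k : ℝ) - 3 * δ * k)) := by
            rw [← Real.rpow_mul (by norm_num), ← Real.rpow_mul (by norm_num),
              ← Real.rpow_add (by norm_num)]
      _ = (2:ℝ) ^ (-(3 * (k : ℝ) * binH δ)) := by
            congr 1
            rw [binH, hb]
            ring
    rw [this, ← Real.rpow_neg (by norm_num), neg_neg]
  -- final comparison
  have hlt : (2 : ℝ) ^ (3 * (k : ℝ) * binH δ) < (2 : ℝ) ^ ((k : ℝ)) := by
    apply Real.rpow_lt_rpow_of_exponent_lt (by norm_num)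
    have hkpos : (0 : ℝ) < k := by exact_mod_cast hk0
    nlinarith
  have hnat : (2 : ℕ) ^ k ≤ (2 ^ k - 1) ^ 2 := by
    have h4 : 4 ≤ 2 ^ k := by
      calc 4 = 2 ^ 2 := by norm_num
      _ ≤ 2 ^ k := Nat.pow_le_pow_right (by norm_num) hk
    set m := 2 ^ k - 1 with hm
    have hmk : 2 ^ k = m + 1 := by omega
    have hm3 : 3 ≤ m := by omega
    rw [hmk]
    nlinarith
  have hfin : (T'.card : ℝ) < (((2 ^ k - 1) ^ 2 : ℕ) : ℝ) := by
    calc (T'.card : ℝ) ≤ μ⁻¹ := hcard2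
    _ < (2 : ℝ) ^ ((k : ℝ)) := by rw [hμeq]; exact hlt
    _ = ((2 ^ k : ℕ) : ℝ) := by rw [Real.rpow_natCast]; push_cast; ring
    _ ≤ (((2 ^ k - 1) ^ 2 : ℕ) : ℝ) := by exact_mod_cast hnat
  exact_mod_cast hfin

theorem stmt9 (δ : ℝ) (hδ : δ ∈ Set.Ioo (0 : ℝ) (1 / 2)) (hH : binH δ < 1 / 3) :
    ∃ K : ℕ, ∀ k : ℕ, K ≤ k →
      ∃ A₁ A₂ : Matrix (Fin k) (Fin k) (ZMod 2), IsUnit A₁ ∧ IsUnit A₂ ∧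
        ∀ u : Fin k → ZMod 2, u ≠ 0 →
          3 * δ * k < (hammingNorm u + hammingNorm (Matrix.vecMul u A₁)
            + hammingNorm (Matrix.vecMul u A₂) : ℝ) := by
  obtain ⟨hδ0, hδ2⟩ := hδ
  refine ⟨2, fun k hk => ?_⟩
  classical
  have hk0 : 0 < k := by omega
  set G : Finset (Matrix (Fin k) (Fin k) (ZMod 2)) := univ.filter (fun A => IsUnit A) with hG
  set F : (Fin k → ZMod 2) → (Fin k → ZMod 2) → Finset (Matrix (Fin k) (Fin k) (ZMod 2)) :=
    fun u v => univ.filter (fun A => IsUnit A ∧ Matrix.vecMul u A = v) with hF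
  set U : Finset (Fin k → ZMod 2) := univ.filter (fun v => v ≠ 0) with hU
  have hcardV : Fintype.card (Fin k → ZMod 2) = 2 ^ k := by
    simp [ZMod.card]
  have hcardU : U.card = 2 ^ k - 1 := by
    have h0 : U = univ \ {0} := by
      ext v; simp [hU]
    rw [h0, Finset.card_sdiff_of_subset (by simp), Finset.card_singleton, Finset.card_univ, hcardV]
  -- fibers have equal cardinality
  have hfib : ∀ u v w : Fin k → ZMod 2, u ≠ 0 → v ≠ 0 → w ≠ 0 →
      (F u v).card = (F u w).card := by
    intro u v w hu hv hw
    obtain ⟨C, hCu, hC⟩ := exists_unit_vecMul_eq v w hv hw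
    have hCC' : C * (↑hCu.unit⁻¹ : Matrix (Fin k) (Fin k) (ZMod 2)) = 1 := hCu.mul_val_inv
    have hC'C : (↑hCu.unit⁻¹ : Matrix (Fin k) (Fin k) (ZMod 2)) * C = 1 := hCu.val_inv_mul
    refine Finset.card_bij' (fun A _ => A * C)
      (fun B _ => B * (↑hCu.unit⁻¹ : Matrix (Fin k) (Fin k) (ZMod 2))) ?_ ?_ ?_ ?_
    · intro A hA
      simp only [hF, Finset.mem_filter, Finset.mem_univ, true_and] at hA ⊢
      refine ⟨hA.1.mul hCu, ?_⟩
      rw [← Matrix.vecMul_vecMul, hA.2, hC]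
    · intro B hB
      simp only [hF, Finset.mem_filter, Finset.mem_univ, true_and] at hB ⊢
      refine ⟨hB.1.mul (Units.isUnit _), ?_⟩
      rw [← Matrix.vecMul_vecMul, hB.2, ← hC, Matrix.vecMul_vecMul, hCC', Matrix.vecMul_one]
    · intro A hA
      simp only [mul_assoc, hCC', mul_one]
    · intro B hB
      simp only [mul_assoc, hC'C, mul_one]
  -- partition G by images
  have key : ∀ u v : Fin k → ZMod 2, u ≠ 0 → v ≠ 0 → G.card = U.card * (F u v).card := by
    intro u v hu hv
    have h1 : G.card = ∑ w ∈ U, (G.filter (fun A => Matrix.vecMul u A = w)).card := by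
      apply Finset.card_eq_sum_card_fiberwise
      intro A hA
      simp only [Finset.mem_coe, hG, Finset.mem_filter, Finset.mem_univ, true_and] at hA
      simp only [Finset.mem_coe, hU, Finset.mem_filter, Finset.mem_univ, true_and]
      exact vecMul_ne_zero' hA hu
    have h2 : ∀ w : Fin k → ZMod 2, G.filter (fun A => Matrix.vecMul u A = w) = F u w := by
      intro w
      rw [hG, hF, Finset.filter_filter]
    have h3 : ∀ w ∈ U, (F u w).card = (F u v).card := by
      intro w hw
      simp only [hU, Finset.mem_filter, Finset.mem_univ, true_and] at hw
      exact hfib u w v hu hw hv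
    rw [h1, Finset.sum_congr rfl (fun w hw => by rw [h2 w, h3 w hw]), Finset.sum_const,
      smul_eq_mul]
  -- the common fiber cardinality
  set u₀ : Fin k → ZMod 2 := Pi.single (⟨0, hk0⟩ : Fin k) (1 : ZMod 2) with hu₀def
  have hu₀ : u₀ ≠ 0 := by
    intro h
    have := congrFun h ⟨0, hk0⟩
    rw [hu₀def, Pi.single_eq_same] at this
    exact one_ne_zero this
  set c : ℕ := (F u₀ u₀).card with hc0
  have hUpos : 0 < U.card := by
    rw [hcardU]
    have : 4 ≤ 2 ^ k := by
      calc 4 = 2 ^ 2 := by norm_num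
      _ ≤ 2 ^ k := Nat.pow_le_pow_right (by norm_num) hk
    omega
  have hc : ∀ u v : Fin k → ZMod 2, u ≠ 0 → v ≠ 0 → (F u v).card = c := by
    intro u v hu hv
    have := (key u v hu hv).symm.trans (key u₀ u₀ hu₀ hu₀)
    exact Nat.eq_of_mul_eq_mul_left hUpos this
  have hcpos : 0 < c := by
    rw [hc0]
    apply Finset.card_pos.mpr
    exact ⟨1, by simp [hF, Matrix.vecMul_one]⟩
  have hGcard : G.card = U.card * c := key u₀ u₀ hu₀ hu₀
  -- the bad set
  set Bad := (G ×ˢ G).filter (fun p => ∃ u : Fin k → ZMod 2, u ≠ 0 ∧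
    (hammingNorm u + hammingNorm (Matrix.vecMul u p.1)
      + hammingNorm (Matrix.vecMul u p.2) : ℝ) ≤ 3 * δ * k) with hBad
  set B := fun u : Fin k → ZMod 2 => (G ×ˢ G).filter (fun p =>
    (hammingNorm u + hammingNorm (Matrix.vecMul u p.1)
      + hammingNorm (Matrix.vecMul u p.2) : ℝ) ≤ 3 * δ * k) with hB
  have hBadsub : Bad ⊆ U.biUnion B := by
    intro p hp
    simp only [hBad, Finset.mem_filter] at hp
    obtain ⟨hpG, u, hu, hcond⟩ := hp
    apply Finset.mem_biUnion.mpr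
    exact ⟨u, by simp [hU, hu], by simp only [hB, Finset.mem_filter]; exact ⟨hpG, hcond⟩⟩
  -- count B u
  set Tu := fun u : Fin k → ZMod 2 =>
    (univ : Finset ((Fin k → ZMod 2) × (Fin k → ZMod 2))).filter (fun q => q.1 ≠ 0 ∧ q.2 ≠ 0 ∧
      (hammingNorm u + hammingNorm q.1 + hammingNorm q.2 : ℝ) ≤ 3 * δ * k) with hTu
  have hBu : ∀ u : Fin k → ZMod 2, u ≠ 0 → (B u).card = (Tu u).card * (c * c) := by
    intro u hu
    have h1 : (B u).card = ∑ q ∈ Tu u,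
        ((B u).filter (fun p => (Matrix.vecMul u p.1, Matrix.vecMul u p.2) = q)).card := by
      apply Finset.card_eq_sum_card_fiberwise
      intro p hp
      simp only [Finset.mem_coe, hB, Finset.mem_filter, Finset.mem_product, hG, Finset.mem_univ, true_and] at hp
      obtain ⟨⟨hp1, hp2⟩, hcond⟩ := hp
      simp only [Finset.mem_coe, hTu, Finset.mem_filter, Finset.mem_univ, true_and]
      exact ⟨vecMul_ne_zero' hp1 hu, vecMul_ne_zero' hp2 hu, hcond⟩
    have h2 : ∀ q ∈ Tu u,
        ((B u).filter (fun p => (Matrix.vecMul u p.1, Matrix.vecMul u p.2) = q))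
          = (F u q.1) ×ˢ (F u q.2) := by
      intro q hq
      simp only [hTu, Finset.mem_filter, Finset.mem_univ, true_and] at hq
      obtain ⟨hq1, hq2, hqcond⟩ := hq
      ext p
      simp only [hB, Finset.mem_filter, Finset.mem_product, hG, hF, Finset.mem_univ, true_and,
        Prod.mk.injEq]
      constructor
      · rintro ⟨⟨⟨hu1, hu2⟩, -⟩, heq⟩
        exact ⟨⟨hu1, congrArg Prod.fst heq⟩, hu2, congrArg Prod.snd heq⟩
      · rintro ⟨⟨h1', h4⟩, h2', h5⟩
        refine ⟨⟨⟨h1', h2'⟩, ?_⟩, ?_⟩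
        · rw [h4, h5]; exact hqcond
        · rw [h4, h5]
    have h3 : ∀ q ∈ Tu u,
        ((B u).filter (fun p => (Matrix.vecMul u p.1, Matrix.vecMul u p.2) = q)).card = c * c := by
      intro q hq
      rw [h2 q hq, Finset.card_product]
      simp only [hTu, Finset.mem_filter, Finset.mem_univ, true_and] at hq
      rw [hc u q.1 hu hq.1, hc u q.2 hu hq.2.1]
    rw [h1, Finset.sum_congr rfl h3, Finset.sum_const, smul_eq_mul]
  -- sum of Tu cards
  have hTusum : ∑ u ∈ U, (Tu u).card ≤
      (univ.filter (fun t : (Fin k → ZMod 2) × (Fin k → ZMod 2) × (Fin k → ZMod 2) =>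
        (hammingNorm t.1 + hammingNorm t.2.1 + hammingNorm t.2.2 : ℝ) ≤ 3 * δ * k)).card := by
    rw [← Finset.card_sigma]
    apply Finset.card_le_card_of_injOn (fun t => (t.1, t.2.1, t.2.2))
    · rintro ⟨u, q⟩ ht
      simp only [Finset.mem_coe, Finset.mem_sigma, hU, hTu, Finset.mem_filter, Finset.mem_univ, true_and] at ht
      simp only [Finset.mem_coe, Finset.mem_filter, Finset.mem_univ, true_and]
      exact ht.2.2.2
    · rintro ⟨u, q⟩ _ ⟨u', q'⟩ _ h
      simp only [Prod.mk.injEq] at h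
      obtain ⟨h1, h2, h3⟩ := h
      subst h1
      congr 1
      exact Prod.ext h2 h3
  -- put everything together
  have hBadcard : Bad.card < (G ×ˢ G).card := by
    calc Bad.card ≤ ∑ u ∈ U, (B u).card :=
        le_trans (Finset.card_le_card hBadsub) (Finset.card_biUnion_le)
    _ = ∑ u ∈ U, (Tu u).card * (c * c) := by
        apply Finset.sum_congr rfl
        intro u hu
        simp only [hU, Finset.mem_filter, Finset.mem_univ, true_and] at hu
        exact hBu u hu
    _ = (∑ u ∈ U, (Tu u).card) * (c * c) := by rw [Finset.sum_mul]
    _ ≤ (univ.filter (fun t : (Fin k → ZMod 2) × (Fin k → ZMod 2) × (Fin k → ZMod 2) =>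
        (hammingNorm t.1 + hammingNorm t.2.1 + hammingNorm t.2.2 : ℝ) ≤ 3 * δ * k)).card
          * (c * c) := Nat.mul_le_mul_right _ hTusum
    _ < (2 ^ k - 1) ^ 2 * (c * c) := by
        refine (Nat.mul_lt_mul_right (Nat.mul_pos hcpos hcpos)).mpr ?_
        apply Tcard hδ0 hδ2 hH hk
        intro t ht
        simp only [Finset.mem_filter, Finset.mem_univ, true_and] at ht
        exact ht
    _ = (U.card * c) * (U.card * c) := by rw [← hcardU]; ring
    _ = (G ×ˢ G).card := by rw [Finset.card_product, hGcard]
  -- extract a good pair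
  have hnsub : ¬ (G ×ˢ G ⊆ Bad) := fun hsub =>
    absurd (Finset.card_le_card hsub) (not_le.mpr hBadcard)
  obtain ⟨p, hpG, hpB⟩ := Finset.not_subset.mp hnsub
  refine ⟨p.1, p.2, ?_, ?_, ?_⟩
  · have := (Finset.mem_product.mp hpG).1
    simpa [hG] using this
  · have := (Finset.mem_product.mp hpG).2
    simpa [hG] using this
  · intro u hu
    by_contra hle
    push_neg at hle
    apply hpB
    simp only [hBad, Finset.mem_filter]
    exact ⟨hpG, u, hu, hle⟩
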